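/- Let n ≥ 1, let A0 be a real n×n matrix, E0 a real n×1 column vector, C0 a real 1×n row vector, and suppose (A0, C0) is observable, i.e., the observability matrix S0 whose rows are C0, C0·A0, …, C0·A0^{n−1} is invertible. Then the following two statements are equivalent: (i) for every z ∈ ℂ, the complex (n+1)×(n+1) matrix [[A0 − z·I_n, E0], [C0, 0]] (entries coerced from ℝ to ℂ) has rank n+1; (ii) C0·A0^{i}·E0 = 0 for every i with 0 ≤ i ≤ n−2, and C0·A0^{n−1}·E0 ≠ 0. -/

import Mathlib

open Matrix

/-- The observability matrix of the pair `(M, c)`: rows `c, c*M, …, c*M^(m-1)`. -/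
noncomputable def obsMat {m : ℕ} (M : Matrix (Fin m) (Fin m) ℝ)
    (c : Matrix (Fin 1) (Fin m) ℝ) : Matrix (Fin m) (Fin m) ℝ :=
  Matrix.of fun i j => (c * M ^ (i : ℕ)) 0 j

/-- The Rosenbrock system matrix `[[A0 - z I, E0], [C0, 0]]` with entries coerced to `ℂ`. -/
noncomputable def rosenbrock (n : ℕ) (A0 : Matrix (Fin n) (Fin n) ℝ)
    (E0 : Matrix (Fin n) (Fin 1) ℝ) (C0 : Matrix (Fin 1) (Fin n) ℝ) (z : ℂ) :
    Matrix (Fin n ⊕ Fin 1) (Fin n ⊕ Fin 1) ℂ :=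
  Matrix.fromBlocks (A0.map Complex.ofReal - z • 1) (E0.map Complex.ofReal)
    (C0.map Complex.ofReal) 0

open Polynomial Finset

set_option maxHeartbeats 1000000

lemma rank_eq_card_iff_det_ne_zero {ι : Type*} [Fintype ι] [DecidableEq ι]
    {K : Type*} [Field K] (M : Matrix ι ι K) :
    M.rank = Fintype.card ι ↔ M.det ≠ 0 := by
  constructor
  · intro h hd
    obtain ⟨v, hv, hMv⟩ := (Matrix.exists_mulVec_eq_zero_iff).2 hd
    have hmem : v ∈ LinearMap.ker M.mulVecLin := by
      simp [LinearMap.mem_ker, Matrix.mulVecLin_apply, hMv]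
    have hker : LinearMap.ker M.mulVecLin ≠ ⊥ := fun hb => hv (by simpa [hb] using hmem)
    have h1 : 0 < Module.finrank K (LinearMap.ker M.mulVecLin) := by
      rw [Module.finrank_pos_iff] ; exact Submodule.nontrivial_iff_ne_bot.2 hker
    have h2 := LinearMap.finrank_range_add_finrank_ker M.mulVecLin
    rw [Module.finrank_pi] at h2
    have : M.rank = Module.finrank K (LinearMap.range M.mulVecLin) := rfl
    omega
  · intro hd
    exact Matrix.rank_of_isUnit M ((Matrix.isUnit_iff_isUnit_det M).2 (isUnit_iff_ne_zero.2 hd))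

lemma eval_ne_zero_iff_coeff (p : Polynomial ℂ) :
    (∀ z : ℂ, p.eval z ≠ 0) ↔ (p.coeff 0 ≠ 0 ∧ ∀ k, 1 ≤ k → p.coeff k = 0) := by
  constructor
  · intro h
    have hp0 : p ≠ 0 := fun h0 => h 0 (by simp [h0])
    have hdeg : p.degree ≤ 0 := by
      by_contra hd
      obtain ⟨z, hz⟩ := Complex.exists_root (lt_of_not_ge hd)
      exact h z hz
    have hnd : p.natDegree = 0 := natDegree_eq_zero_iff_degree_le_zero.2 hdeg
    refine ⟨by simpa [coeff_zero_eq_eval_zero] using h 0, fun k hk => ?_⟩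
    exact coeff_eq_zero_of_natDegree_lt (by omega)
  · rintro ⟨h0, hk⟩ z
    have : p = C (p.coeff 0) := by
      ext k
      rcases Nat.eq_zero_or_pos k with rfl | hkpos
      · simp
      · simp [coeff_C, Nat.pos_iff_ne_zero.1 hkpos, hk k hkpos]
    rw [this]; simpa using h0

variable {n : ℕ}

/-- Partial sums of the charpoly applied to `A`, used as coefficients of `adjugate (charmatrix A)`. -/
noncomputable def mfun (A : Matrix (Fin n) (Fin n) ℂ) (k : ℕ) : Matrix (Fin n) (Fin n) ℂ :=
  ∑ j ∈ Finset.Icc k n, A.charpoly.coeff j • A ^ (j - k)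

lemma mfun_top (A : Matrix (Fin n) (Fin n) ℂ) : mfun A n = 1 := by
  have hmon : A.charpoly.Monic := A.charpoly_monic
  have hnd : A.charpoly.natDegree = n := by
    simpa using A.charpoly_natDegree_eq_dim
  have : A.charpoly.coeff n = 1 := by
    have := hmon.coeff_natDegree
    rwa [hnd] at this
  simp [mfun, this]

lemma mfun_zero (A : Matrix (Fin n) (Fin n) ℂ) : mfun A 0 = 0 := by
  have hnd : A.charpoly.natDegree = n := by
    simpa using A.charpoly_natDegree_eq_dim
  have hCH := A.aeval_self_charpoly
  rw [Polynomial.aeval_eq_sum_range, hnd] at hCH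
  rw [mfun]
  rw [show Finset.Icc 0 n = Finset.range (n+1) by
    rw [Finset.range_eq_Ico, Finset.Ico_add_one_right_eq_Icc]]
  simpa using hCH

lemma mfun_succ (A : Matrix (Fin n) (Fin n) ℂ) (k : ℕ) (hk : k ≤ n) :
    mfun A k = A * mfun A (k + 1) + A.charpoly.coeff k • 1 := by
  rw [mfun, mfun, Finset.mul_sum]
  rw [show Finset.Icc k n = insert k (Finset.Icc (k+1) n) by
    ext x; simp [Finset.mem_Icc, Finset.mem_insert]; omega]
  rw [Finset.sum_insert (by simp)]
  rw [add_comm]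
  congr 1
  · apply Finset.sum_congr rfl
    intro j hj
    simp only [Finset.mem_Icc] at hj
    rw [mul_smul_comm]
    congr 1
    rw [← pow_succ']
    congr 1
    omega
  · simp

noncomputable def Bmat (A : Matrix (Fin n) (Fin n) ℂ) : Matrix (Fin n) (Fin n) ℂ[X] :=
  ∑ k ∈ Finset.range n, (X : ℂ[X]) ^ k • (mfun A (k+1)).map Polynomial.C

lemma smul_one_map_C (c : ℂ) :
    ((c • (1 : Matrix (Fin n) (Fin n) ℂ)).map Polynomial.C)
      = Polynomial.C c • (1 : Matrix (Fin n) (Fin n) ℂ[X]) := by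
  ext i j
  simp [Matrix.map_apply, Matrix.one_apply, apply_ite]

lemma charmatrix_mul_Bmat (A : Matrix (Fin n) (Fin n) ℂ) :
    charmatrix A * Bmat A = A.charpoly • (1 : Matrix (Fin n) (Fin n) ℂ[X]) := by
  have hnd : A.charpoly.natDegree = n := by
    simpa using A.charpoly_natDegree_eq_dim
  rw [Bmat, Finset.mul_sum]
  have hterm : ∀ k ∈ Finset.range n,
      charmatrix A * ((X : ℂ[X]) ^ k • (mfun A (k+1)).map Polynomial.C)
        = ((X : ℂ[X]) ^ (k+1) • (mfun A (k+1)).map Polynomial.C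
            - (X : ℂ[X]) ^ k • (mfun A k).map Polynomial.C)
          + ((X : ℂ[X]) ^ k * Polynomial.C (A.charpoly.coeff k)) •
              (1 : Matrix (Fin n) (Fin n) ℂ[X]) := by
    intro k hk
    rw [Finset.mem_range] at hk
    have hmk := mfun_succ A k (le_of_lt hk)
    have hmapmul : (A.map Polynomial.C) * ((mfun A (k+1)).map Polynomial.C)
        = (A * mfun A (k+1)).map Polynomial.C := by
      exact (Matrix.map_mul (f := (Polynomial.C : ℂ →+* ℂ[X]))).symm
    have hAm : (A * mfun A (k+1)).map Polynomial.C
        = (mfun A k).map Polynomial.C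
            - Polynomial.C (A.charpoly.coeff k) • (1 : Matrix (Fin n) (Fin n) ℂ[X]) := by
      have : A * mfun A (k+1) = mfun A k - A.charpoly.coeff k • 1 := by
        rw [hmk]; ring_nf; abel
      rw [this]
      rw [Matrix.map_sub _ (by simp)]
      rw [smul_one_map_C]
    rw [charmatrix]
    simp only [RingHom.mapMatrix_apply]
    rw [Matrix.sub_mul]
    rw [Matrix.mul_smul, Matrix.mul_smul, hmapmul, hAm]
    have hscal : (Matrix.scalar (Fin n) (X : ℂ[X])) * ((mfun A (k+1)).map Polynomial.C)
        = (X : ℂ[X]) • ((mfun A (k+1)).map Polynomial.C) := by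
      rw [Matrix.scalar_apply, ← Matrix.smul_eq_diagonal_mul]
    rw [hscal, smul_smul, smul_sub]
    rw [← pow_succ]
    rw [smul_smul]
    module
  rw [Finset.sum_congr rfl hterm]
  rw [Finset.sum_add_distrib]
  rw [Finset.sum_range_sub (f := fun k => (X : ℂ[X]) ^ k • (mfun A k).map Polynomial.C)]
  rw [mfun_top, mfun_zero]
  have hcp : A.charpoly = ∑ k ∈ Finset.range n, Polynomial.C (A.charpoly.coeff k) * X ^ k
      + X ^ n := by
    conv_lhs => rw [A.charpoly.as_sum_range' (n+1) (by omega)]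
    rw [Finset.sum_range_succ]
    have hc1 : A.charpoly.coeff n = 1 := by
      have := A.charpoly_monic.coeff_natDegree
      rwa [hnd] at this
    simp [hc1, Polynomial.C_mul_X_pow_eq_monomial, Polynomial.X_pow_eq_monomial]
  have hz : ((0 : Matrix (Fin n) (Fin n) ℂ).map Polynomial.C) = 0 := by
    ext i j; simp
  rw [hz, smul_zero, sub_zero]
  rw [Matrix.map_one Polynomial.C Polynomial.C_0 Polynomial.C_1]
  conv_rhs => rw [hcp]
  rw [add_smul, Finset.sum_smul]
  rw [add_comm]
  congr 1
  apply Finset.sum_congr rfl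
  intro k _
  rw [mul_comm]

lemma adjugate_charmatrix_eq (A : Matrix (Fin n) (Fin n) ℂ) :
    adjugate (charmatrix A) = Bmat A := by
  have hchi : A.charpoly ≠ 0 := A.charpoly_monic.ne_zero
  have h1 : charmatrix A * Bmat A = A.charpoly • 1 := charmatrix_mul_Bmat A
  have h2 : adjugate (charmatrix A) * (charmatrix A * Bmat A)
      = A.charpoly • Bmat A := by
    rw [← Matrix.mul_assoc, Matrix.adjugate_mul]
    rw [show (charmatrix A).det = A.charpoly from rfl]
    rw [Matrix.smul_mul, Matrix.one_mul]
  rw [h1] at h2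
  rw [Matrix.mul_smul, Matrix.mul_one] at h2
  refine Matrix.ext fun i j => mul_left_cancel₀ hchi ?_
  have h3 := congrFun (congrFun h2 i) j
  simpa [Matrix.smul_apply, smul_eq_mul] using h3

noncomputable def Ppoly (A : Matrix (Fin n) (Fin n) ℂ) (E : Matrix (Fin n) (Fin 1) ℂ)
    (Cm : Matrix (Fin 1) (Fin n) ℂ) : ℂ[X] :=
  (Matrix.fromBlocks (-(charmatrix A)) (E.map Polynomial.C) (Cm.map Polynomial.C)
    (0 : Matrix (Fin 1) (Fin 1) ℂ[X])).det

noncomputable def Npoly (A : Matrix (Fin n) (Fin n) ℂ) (E : Matrix (Fin n) (Fin 1) ℂ)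
    (Cm : Matrix (Fin 1) (Fin n) ℂ) : ℂ[X] :=
  ((Cm.map Polynomial.C) * adjugate (charmatrix A) * (E.map Polynomial.C)) 0 0

lemma Ppoly_eq (A : Matrix (Fin n) (Fin n) ℂ) (E : Matrix (Fin n) (Fin 1) ℂ)
    (Cm : Matrix (Fin 1) (Fin n) ℂ) :
    Ppoly A E Cm = (-1 : ℂ[X]) ^ n * Npoly A E Cm := by
  set K := FractionRing (ℂ[X])
  have hinj : Function.Injective (algebraMap ℂ[X] K) := IsFractionRing.injective _ _
  apply hinj
  set φ := algebraMap ℂ[X] K with hφ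
  set Mk := (charmatrix A).map φ with hMk
  have hchi : A.charpoly ≠ 0 := A.charpoly_monic.ne_zero
  have hdet : Mk.det = φ A.charpoly := by
    rw [hMk, ← RingHom.mapMatrix_apply, ← RingHom.map_det]
    rfl
  have hne : φ A.charpoly ≠ 0 := fun h => hchi (hinj (by simpa using h))
  have hUdet : IsUnit ((-Mk).det) := by
    rw [Matrix.det_neg, hdet]
    apply IsUnit.mul (IsUnit.pow _ (isUnit_iff_ne_zero.2 (by simp)))
      (isUnit_iff_ne_zero.2 hne)
  have hinv : (-Mk)⁻¹ = -((φ A.charpoly)⁻¹ • Mk.adjugate) := by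
    apply Matrix.inv_eq_right_inv
    rw [Matrix.mul_neg, Matrix.neg_mul, neg_neg, Matrix.mul_smul, Matrix.mul_adjugate, hdet,
      smul_smul, inv_mul_cancel₀ hne, one_smul]
  -- map the determinant
  rw [Ppoly, RingHom.map_det, RingHom.mapMatrix_apply]
  have hneg : (-(charmatrix A)).map ⇑φ = -Mk := by
    ext i j; simp [hMk, Matrix.map_apply]
  have h0 : ((0 : Matrix (Fin 1) (Fin 1) ℂ[X])).map ⇑φ = 0 := by
    ext i j; simp
  rw [Matrix.fromBlocks_map, hneg, h0]
  haveI := Matrix.invertibleOfIsUnitDet _ hUdet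
  rw [Matrix.det_fromBlocks₁₁]
  rw [Matrix.invOf_eq_nonsing_inv, hinv]
  rw [Matrix.det_neg, hdet]
  rw [Matrix.mul_neg, Matrix.neg_mul, zero_sub, neg_neg]
  rw [Matrix.mul_smul, Matrix.smul_mul, Matrix.det_fin_one]
  rw [Matrix.smul_apply, smul_eq_mul]
  have hadj : Mk.adjugate = ((charmatrix A).adjugate).map φ := by
    rw [hMk, ← RingHom.mapMatrix_apply, ← RingHom.map_adjugate, RingHom.mapMatrix_apply]
  rw [hadj]
  have hentry : ((Cm.map Polynomial.C).map φ * ((charmatrix A).adjugate).map φ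
      * ((E.map Polynomial.C).map φ)) 0 0 = φ (Npoly A E Cm) := by
    rw [← Matrix.map_mul, ← Matrix.map_mul]
    rfl
  rw [hentry]
  have hcard : Fintype.card (Fin n) = n := by simp
  rw [hcard, _root_.map_mul, map_pow, map_neg, _root_.map_one, mul_assoc, ← mul_assoc (φ A.charpoly),
    mul_inv_cancel₀ hne, one_mul]

lemma Npoly_coeff (A : Matrix (Fin n) (Fin n) ℂ) (E : Matrix (Fin n) (Fin 1) ℂ)
    (Cm : Matrix (Fin 1) (Fin n) ℂ) (l : ℕ) :
    (Npoly A E Cm).coeff l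
      = if l < n then (Cm * mfun A (l+1) * E) 0 0 else 0 := by
  rw [Npoly, adjugate_charmatrix_eq, Bmat, Matrix.mul_sum, Matrix.sum_mul]
  rw [Matrix.sum_apply]
  have hterm : ∀ k ∈ Finset.range n,
      ((Cm.map Polynomial.C) * ((X : ℂ[X]) ^ k • (mfun A (k+1)).map Polynomial.C)
        * (E.map Polynomial.C)) 0 0
      = Polynomial.monomial k ((Cm * mfun A (k+1) * E) 0 0) := by
    intro k _
    rw [Matrix.mul_smul, Matrix.smul_mul, Matrix.smul_apply]
    rw [← Matrix.map_mul, ← Matrix.map_mul]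
    rw [smul_eq_mul, Matrix.map_apply, mul_comm, Polynomial.C_mul_X_pow_eq_monomial]
  rw [Finset.sum_congr rfl hterm]
  rw [Polynomial.finset_sum_coeff]
  simp only [Polynomial.coeff_monomial]
  rw [Finset.sum_ite_eq' (Finset.range n) l (fun k => (Cm * mfun A (k+1) * E) 0 0)]
  simp [Finset.mem_range]

lemma mfun_entry (A : Matrix (Fin n) (Fin n) ℂ) (E : Matrix (Fin n) (Fin 1) ℂ)
    (Cm : Matrix (Fin 1) (Fin n) ℂ) (k : ℕ) :
    (Cm * mfun A (k+1) * E) 0 0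
      = ∑ j ∈ Finset.Icc (k+1) n, A.charpoly.coeff j * (Cm * A ^ (j - (k+1)) * E) 0 0 := by
  rw [mfun, Matrix.mul_sum, Matrix.sum_mul, Matrix.sum_apply]
  apply Finset.sum_congr rfl
  intro j _
  rw [Matrix.mul_smul, Matrix.smul_mul, Matrix.smul_apply, smul_eq_mul]

lemma det_rosenbrock (n : ℕ) (A0 : Matrix (Fin n) (Fin n) ℝ)
    (E0 : Matrix (Fin n) (Fin 1) ℝ) (C0 : Matrix (Fin 1) (Fin n) ℝ) (z : ℂ) :
    (rosenbrock n A0 E0 C0 z).det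
      = (Ppoly (A0.map Complex.ofReal) (E0.map Complex.ofReal)
          (C0.map Complex.ofReal)).eval z := by
  rw [Ppoly, ← Polynomial.coe_evalRingHom, RingHom.map_det, rosenbrock]
  congr 1
  rw [RingHom.mapMatrix_apply, Matrix.fromBlocks_map]
  ext i j
  rcases i with i | i <;> rcases j with j | j <;>
    simp [charmatrix_apply, Matrix.map_apply, Matrix.sub_apply, Matrix.smul_apply,
      Matrix.one_apply, apply_ite, Matrix.diagonal_apply, mul_ite, Matrix.neg_apply,
      Matrix.add_apply, Matrix.scalar_apply, sub_eq_neg_add, add_comm] <;>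
    (try (split_ifs with h <;> tauto))


theorem stmt0 (n : ℕ) (hn : 1 ≤ n)
    (A0 : Matrix (Fin n) (Fin n) ℝ) (E0 : Matrix (Fin n) (Fin 1) ℝ)
    (C0 : Matrix (Fin 1) (Fin n) ℝ)
    (hobs : IsUnit (obsMat A0 C0).det) :
    (∀ z : ℂ, (rosenbrock n A0 E0 C0 z).rank = n + 1)
      ↔ ((∀ i : ℕ, i < n - 1 → (C0 * A0 ^ i * E0) 0 0 = 0)
          ∧ (C0 * A0 ^ (n - 1) * E0) 0 0 ≠ 0) := by
  classical
  set Ac := A0.map Complex.ofReal with hAcdef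
  set Ec := E0.map Complex.ofReal with hEcdef
  set Cc := C0.map Complex.ofReal with hCcdef
  have hmm : ∀ i : ℕ, (Cc * Ac ^ i * Ec) 0 0 = (((C0 * A0 ^ i * E0) 0 0 : ℝ) : ℂ) := by
    intro i
    have hpow : Ac ^ i = (A0 ^ i).map Complex.ofReal := by
      have h := map_pow (Complex.ofRealHom.mapMatrix (m := Fin n)) A0 i
      simp only [RingHom.mapMatrix_apply] at h
      exact h.symm
    have hre : (Complex.ofReal : ℝ → ℂ) = ⇑Complex.ofRealHom := rfl
    rw [hpow, hEcdef, hCcdef, hre, ← Matrix.map_mul, ← Matrix.map_mul]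
    rfl
  have hcn : Ac.charpoly.coeff n = 1 := by
    have hnd : Ac.charpoly.natDegree = n := by simp
    have := Ac.charpoly_monic.coeff_natDegree
    rwa [hnd] at this
  have key : (∀ z : ℂ, (rosenbrock n A0 E0 C0 z).rank = n + 1)
      ↔ ((Npoly Ac Ec Cc).coeff 0 ≠ 0 ∧ ∀ k, 1 ≤ k → (Npoly Ac Ec Cc).coeff k = 0) := by
    rw [← eval_ne_zero_iff_coeff]
    apply forall_congr'
    intro z
    have hcard : n + 1 = Fintype.card (Fin n ⊕ Fin 1) := by simp
    rw [hcard, rank_eq_card_iff_det_ne_zero, det_rosenbrock, ← hAcdef, ← hEcdef, ← hCcdef,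
      Ppoly_eq, Polynomial.eval_mul, Polynomial.eval_pow, Polynomial.eval_neg,
      Polynomial.eval_one]
    constructor
    · intro h hN
      exact h (by rw [hN, mul_zero])
    · intro h hP
      exact h ((mul_eq_zero.mp hP).resolve_left (pow_ne_zero _ (by norm_num)))
  rw [key]
  have hco : ∀ l, (Npoly Ac Ec Cc).coeff l = if l < n then
      ∑ j ∈ Finset.Icc (l+1) n, Ac.charpoly.coeff j * (Cc * Ac ^ (j - (l+1)) * Ec) 0 0
      else 0 := by
    intro l
    rw [Npoly_coeff]
    split_ifs with h
    · rw [mfun_entry]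
    · rfl
  constructor
  · rintro ⟨h0, hk⟩
    have hzero : ∀ i, i < n - 1 → (Cc * Ac ^ i * Ec) 0 0 = 0 := by
      intro i
      induction i using Nat.strong_induction_on with
      | _ i IH =>
        intro hi
        have hcoeff := hk (n - 1 - i) (by omega)
        rw [hco, if_pos (by omega)] at hcoeff
        rw [Finset.sum_eq_single n
          (fun j hj hjn => by
            rw [Finset.mem_Icc] at hj
            rw [IH (j - (n - 1 - i + 1)) (by omega) (by omega), mul_zero])
          (fun hn => absurd (Finset.mem_Icc.mpr ⟨by omega, le_refl n⟩) hn)] at hcoeff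
        rw [hcn, one_mul, show n - (n - 1 - i + 1) = i by omega] at hcoeff
        exact hcoeff
    have hc0eq : (Npoly Ac Ec Cc).coeff 0 = (Cc * Ac ^ (n-1) * Ec) 0 0 := by
      rw [hco, if_pos (by omega)]
      rw [Finset.sum_eq_single n
        (fun j hj hjn => by
          rw [Finset.mem_Icc] at hj
          rw [hzero (j - (0 + 1)) (by omega), mul_zero])
        (fun hn => absurd (Finset.mem_Icc.mpr ⟨by omega, le_refl n⟩) hn)]
      rw [hcn, one_mul, show n - (0 + 1) = n - 1 by omega]
    refine ⟨fun i hi => ?_, ?_⟩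
    · have := hzero i hi
      rw [hmm i] at this
      exact_mod_cast this
    · rw [hc0eq, hmm] at h0
      exact_mod_cast h0
  · rintro ⟨hz, hl⟩
    have hzero : ∀ i, i < n - 1 → (Cc * Ac ^ i * Ec) 0 0 = 0 := by
      intro i hi
      rw [hmm, hz i hi]
      simp
    have hc0eq : (Npoly Ac Ec Cc).coeff 0 = (Cc * Ac ^ (n-1) * Ec) 0 0 := by
      rw [hco, if_pos (by omega)]
      rw [Finset.sum_eq_single n
        (fun j hj hjn => by
          rw [Finset.mem_Icc] at hj
          rw [hzero (j - (0 + 1)) (by omega), mul_zero])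
        (fun hn => absurd (Finset.mem_Icc.mpr ⟨by omega, le_refl n⟩) hn)]
      rw [hcn, one_mul, show n - (0 + 1) = n - 1 by omega]
    refine ⟨?_, ?_⟩
    · rw [hc0eq, hmm]
      exact_mod_cast hl
    · intro k hk1
      rw [hco]
      split_ifs with hkn
      · apply Finset.sum_eq_zero
        intro j hj
        rw [Finset.mem_Icc] at hj
        rw [hzero (j - (k+1)) (by omega), mul_zero]
      · rfl
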